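/- Let K be a knot whose double branched cover has H₁ ≅ ℤ/nℤ with linking form λ(x,x) = (m/n)x² mod 1 for some integer m with gcd(m,n)=1. Suppose the linking form splits as (ℤ/kℤ, λ₁) ⊕ (ℤ/ℓℤ, λ₂) where n = kℓ, λ₁ is represented by (±1/k), and ℓ is a perfect square. If s is a prime dividing n to an odd power such that neither m nor -m is a quadratic residue mod s, then no such splitting exists (contradiction). Formally: if n = kℓ with ℓ a perfect square and there exists an integer r coprime to k with m·ℓ·r² ≡ ±1 (mod k), then for every prime s dividing n to an odd power, m or -m is a quadratic residue mod s. -/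
import Mathlib


/-- Let `n = k·ℓ` with `ℓ` a perfect square and `gcd(m,n) = 1`.
If there exists `r` coprime to `k` with `m·ℓ·r² ≡ ±1 (mod k)`, then for every prime
`s` dividing `n` to an odd power, `m` or `-m` is a quadratic residue mod `s`. -/
theorem stmt14 (n k ℓ : ℕ) (m : ℤ) (hn : 0 < n) (hk : 0 < k) (hl : 0 < ℓ)
    (hnkl : n = k * ℓ) (hsq : ∃ l₀ : ℕ, ℓ = l₀ ^ 2)
    (hm : IsCoprime m (n : ℤ))
    (hr : ∃ r : ℤ, IsCoprime r (k : ℤ) ∧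
      (m * (ℓ : ℤ) * r ^ 2 ≡ 1 [ZMOD (k : ℤ)] ∨
       m * (ℓ : ℤ) * r ^ 2 ≡ -1 [ZMOD (k : ℤ)])) :
    ∀ s : ℕ, s.Prime → Odd (n.factorization s) →
      (∃ x : ℤ, x ^ 2 ≡ m [ZMOD (s : ℤ)]) ∨
      (∃ x : ℤ, x ^ 2 ≡ -m [ZMOD (s : ℤ)]) := by
  obtain ⟨l₀, rfl⟩ := hsq
  obtain ⟨r, hrk, hcase⟩ := hr
  intro s hs hodd
  -- s divides k
  have hl0 : l₀ ≠ 0 := by rintro rfl; simp at hl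
  have hfac : n.factorization s = k.factorization s + 2 * (l₀.factorization s) := by
    rw [hnkl, Nat.factorization_mul hk.ne' (by positivity), Nat.factorization_pow]
    simp [mul_comm]
  have hsk : s ∣ k := by
    by_contra hnd
    have h0 : k.factorization s = 0 := Nat.factorization_eq_zero_of_not_dvd hnd
    rw [hfac, h0, zero_add] at hodd
    exact (Nat.not_odd_iff_even.mpr ⟨l₀.factorization s, two_mul _⟩) hodd
  have hsk' : (s : ℤ) ∣ (k : ℤ) := Int.natCast_dvd_natCast.mpr hsk
  have key : ((m * (l₀ : ℤ) * r) ^ 2 : ℤ) = m * (m * ((l₀ ^ 2 : ℕ) : ℤ) * r ^ 2) := by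
    push_cast; ring
  rcases hcase with h | h
  · left
    refine ⟨m * (l₀ : ℤ) * r, ?_⟩
    have : m * ((l₀ ^ 2 : ℕ) : ℤ) * r ^ 2 ≡ 1 [ZMOD (s : ℤ)] := h.of_dvd hsk'
    calc (m * (l₀ : ℤ) * r) ^ 2 = m * (m * ((l₀ ^ 2 : ℕ) : ℤ) * r ^ 2) := key
      _ ≡ m * 1 [ZMOD (s : ℤ)] := this.mul_left m
      _ = m := mul_one m
  · right
    refine ⟨m * (l₀ : ℤ) * r, ?_⟩
    have : m * ((l₀ ^ 2 : ℕ) : ℤ) * r ^ 2 ≡ -1 [ZMOD (s : ℤ)] := h.of_dvd hsk'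
    calc (m * (l₀ : ℤ) * r) ^ 2 = m * (m * ((l₀ ^ 2 : ℕ) : ℤ) * r ^ 2) := key
      _ ≡ m * (-1) [ZMOD (s : ℤ)] := this.mul_left m
      _ = -m := by ring
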